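/- The minimum over probability vectors p in the K-simplex with p_{y_{max}} - p_{\hat{y}} = t (where y_{max} \ne \hat{y} are two fixed distinct indices and p_{y_{max}} = \max_y p_y) of the quantity -(p_{y_{max}} + p_{\hat{y}}) \log((p_{y_{max}} + p_{\hat{y}})/2) + p_{y_{max}} \log(p_{y_{max}}) + p_{\hat{y}} \log(p_{\hat{y}}) equals (1+t)/2 \cdot \log(1+t) + (1-t)/2 \cdot \log(1-t). -/

import Mathlib

open Real Set

noncomputable def psiF (c : ℝ) : ℝ → ℝ :=
  fun m => (m + c) * Real.log (m + c) + (m - c) * Real.log (m - c) - 2 * (m * Real.log m)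

lemma psi_hasDerivAt (c m : ℝ) (h1 : m + c ≠ 0) (h2 : m - c ≠ 0) (h3 : m ≠ 0) :
    HasDerivAt (psiF c)
      (((Real.log (m + c) + 1) * 1 + (Real.log (m - c) + 1) * 1) - 2 * (Real.log m + 1)) m := by
  have A : HasDerivAt (fun x : ℝ => (x + c) * Real.log (x + c)) ((Real.log (m + c) + 1) * 1) m :=
    by have := (Real.hasDerivAt_mul_log h1).comp m ((hasDerivAt_id m).add_const c); exact this
  have B : HasDerivAt (fun x : ℝ => (x - c) * Real.log (x - c)) ((Real.log (m - c) + 1) * 1) m :=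
    by have := (Real.hasDerivAt_mul_log h2).comp m ((hasDerivAt_id m).sub_const c); exact this
  have C : HasDerivAt (fun x : ℝ => 2 * (x * Real.log x)) (2 * (Real.log m + 1)) m :=
    (Real.hasDerivAt_mul_log h3).const_mul 2
  exact (A.add B).sub C

lemma psi_anti (c : ℝ) (hc : 0 ≤ c) : AntitoneOn (psiF c) (Icc c (1/2 : ℝ)) := by
  apply antitoneOn_of_deriv_nonpos (convex_Icc _ _)
  · apply Continuous.continuousOn
    exact ((Real.continuous_mul_log.comp (continuous_id.add continuous_const)).add
      (Real.continuous_mul_log.comp (continuous_id.sub continuous_const))).sub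
      (continuous_const.mul Real.continuous_mul_log)
  · rw [interior_Icc]
    intro m hm
    have hmc : c < m := hm.1
    have h3 : (0:ℝ) < m := lt_of_le_of_lt hc hmc
    exact (psi_hasDerivAt c m (by positivity) (by linarith) (ne_of_gt h3)).differentiableAt.differentiableWithinAt
  · rw [interior_Icc]
    intro m hm
    have hmc : c < m := hm.1
    have h3 : (0:ℝ) < m := lt_of_le_of_lt hc hmc
    have h1 : (0:ℝ) < m + c := by linarith
    have h2 : (0:ℝ) < m - c := by linarith
    rw [(psi_hasDerivAt c m h1.ne' h2.ne' h3.ne').deriv]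
    have key : Real.log (m + c) + Real.log (m - c) ≤ 2 * Real.log m := by
      rw [← Real.log_mul h1.ne' h2.ne', two_mul, ← Real.log_mul h3.ne' h3.ne']
      apply Real.log_le_log (by positivity)
      nlinarith
    linarith

lemma half_mul_log (x : ℝ) (hx : 0 ≤ x) :
    x / 2 * Real.log (x / 2) = x / 2 * Real.log x - x / 2 * Real.log 2 := by
  rcases eq_or_lt_of_le hx with h | h
  · simp [← h]
  · rw [Real.log_div h.ne' two_ne_zero]; ring

lemma psi_half (t : ℝ) (ht0 : 0 ≤ t) (ht1 : t ≤ 1) :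
    psiF (t/2) (1/2) =
      (1 + t) / 2 * Real.log (1 + t) + (1 - t) / 2 * Real.log (1 - t) := by
  have e1 : (1/2 : ℝ) + t/2 = (1 + t)/2 := by ring
  have e2 : (1/2 : ℝ) - t/2 = (1 - t)/2 := by ring
  have h2 : Real.log (1/2 : ℝ) = -Real.log 2 := by
    rw [one_div, Real.log_inv]
  have l1 := half_mul_log (1 + t) (by linarith)
  have l2 := half_mul_log (1 - t) (by linarith)
  unfold psiF
  rw [e1, e2, h2, l1, l2]
  ring

theorem min_transform_eq (K : ℕ) (hK : 2 ≤ K) (i j : Fin K) (hij : i ≠ j)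
    (t : ℝ) (ht0 : 0 ≤ t) (ht1 : t ≤ 1) :
    IsLeast
      ((fun p : Fin K → ℝ =>
          -(p i + p j) * Real.log ((p i + p j) / 2)
            + p i * Real.log (p i) + p j * Real.log (p j)) ''
        {p : Fin K → ℝ | (∀ k, 0 ≤ p k) ∧ ∑ k, p k = 1 ∧ (∀ k, p k ≤ p i) ∧ p i - p j = t})
      ((1 + t) / 2 * Real.log (1 + t) + (1 - t) / 2 * Real.log (1 - t)) := by
  constructor
  · -- membership: witness
    set q : Fin K → ℝ :=
      fun k => (if k = i then (1 + t)/2 else 0) + (if k = j then (1 - t)/2 else 0) with hq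
    have hqi : q i = (1 + t)/2 := by simp [hq, hij]
    have hqj : q j = (1 - t)/2 := by simp [hq, hij.symm]
    refine ⟨q, ⟨?_, ?_, ?_, ?_⟩, ?_⟩
    · intro k
      have h1 : (0:ℝ) ≤ (1+t)/2 := by linarith
      have h2 : (0:ℝ) ≤ (1-t)/2 := by linarith
      rw [hq]
      positivity
    · rw [hq, Finset.sum_add_distrib]
      simp [Finset.sum_ite_eq']
      ring
    · intro k
      rw [hqi, hq]
      show (if k = i then (1 + t)/2 else 0) + (if k = j then (1 - t)/2 else 0) ≤ (1 + t)/2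
      split_ifs with h1 h2
      · exact absurd (h1.symm.trans h2) hij
      · simp
      · simp; linarith
      · simp; linarith
    · rw [hqi, hqj]; ring
    · show -(q i + q j) * Real.log ((q i + q j) / 2)
          + q i * Real.log (q i) + q j * Real.log (q j)
        = (1 + t) / 2 * Real.log (1 + t) + (1 - t) / 2 * Real.log (1 - t)
      rw [hqi, hqj]
      have hsum1 : (1 + t)/2 + (1 - t)/2 = 1 := by ring
      rw [hsum1]
      have hp := psi_half t ht0 ht1
      unfold psiF at hp
      have e1 : (1/2 : ℝ) + t/2 = (1 + t)/2 := by ring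
      have e2 : (1/2 : ℝ) - t/2 = (1 - t)/2 := by ring
      rw [e1, e2] at hp
      rw [← hp]
      norm_num
      ring
  · -- lower bound
    rintro v ⟨p, ⟨hpos, hsum, hmax, hdiff⟩, rfl⟩
    show (1 + t) / 2 * Real.log (1 + t) + (1 - t) / 2 * Real.log (1 - t)
      ≤ -(p i + p j) * Real.log ((p i + p j) / 2)
          + p i * Real.log (p i) + p j * Real.log (p j)
    set a := p i with ha
    set b := p j with hb
    have hbnn : 0 ≤ b := hpos j
    have hab1 : a + b ≤ 1 := by
      have h : a + b = ∑ k ∈ ({i, j} : Finset (Fin K)), p k := by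
        rw [Finset.sum_pair hij]
      rw [h, ← hsum]
      exact Finset.sum_le_sum_of_subset_of_nonneg (Finset.subset_univ _)
        (fun k _ _ => hpos k)
    set m := (a + b)/2 with hm
    set c := t/2 with hc
    have e1 : m + c = a := by rw [hm, hc, ← hdiff]; ring
    have e2 : m - c = b := by rw [hm, hc, ← hdiff]; ring
    have hmem1 : m ∈ Icc c (1/2 : ℝ) := ⟨by linarith, by linarith⟩
    have hmem2 : (1/2 : ℝ) ∈ Icc c (1/2 : ℝ) := ⟨by rw [hc]; linarith, le_rfl⟩
    have hanti := psi_anti c (by rw [hc]; linarith) hmem1 hmem2 hmem1.2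
    rw [psi_half t ht0 ht1] at hanti
    have heq : psiF c m = -(a + b) * Real.log ((a + b)/2) + a * Real.log a + b * Real.log b := by
      unfold psiF
      rw [e1, e2, ← hm]
      ring
    linarith
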